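/- Let G = (V,E) be a finite block graph and let C ⊆ V be a coalition such that the induced subgraph G[C] is connected and has diameter at least 3. Then there exists a partition 𝒬 of C into nonempty parts, each of which induces a connected subgraph of diameter at most 2, such that Σ_{D∈𝒬} uw(D) ≥ uw(C). -/

import Mathlib

open Finset

/-- The utilitarian welfare `2|E(G[C])|/|C|` of a coalition `C`: twice the number of edges
of the induced subgraph, counted as ordered adjacent pairs inside `C`, divided by `|C|`. -/
def uw {V : Type*} [DecidableEq V] (G : SimpleGraph V) [DecidableRel G.Adj]
    (C : Finset V) : ℚ :=
  (((C ×ˢ C).filter fun p => G.Adj p.1 p.2).card : ℚ) / (C.card : ℚ)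

/-- `G` is a block graph: every `S` of size at least 3 inducing a 2-connected subgraph
is a clique. -/
def IsBlockGraph {V : Type*} (G : SimpleGraph V) : Prop :=
  ∀ S : Set V, 3 ≤ S.ncard → (G.induce S).Connected →
    (∀ v ∈ S, (G.induce (S \ {v})).Connected) → G.IsClique S

set_option linter.unusedSectionVars false

namespace BlockAux

open SimpleGraph

variable {V : Type*} [DecidableEq V] {G : SimpleGraph V}

/-- Reachability via a walk whose support lies in the finset `S`. -/
def ReachIn (G : SimpleGraph V) (S : Finset V) (x y : V) : Prop :=
  ∃ p : G.Walk x y, ∀ z ∈ p.support, z ∈ S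

lemma ReachIn.left_mem {S : Finset V} {x y : V} (h : ReachIn G S x y) : x ∈ S := by
  obtain ⟨p, hp⟩ := h; exact hp x p.start_mem_support

lemma ReachIn.right_mem {S : Finset V} {x y : V} (h : ReachIn G S x y) : y ∈ S := by
  obtain ⟨p, hp⟩ := h; exact hp y p.end_mem_support

lemma ReachIn.refl {S : Finset V} {x : V} (hx : x ∈ S) : ReachIn G S x x :=
  ⟨.nil, by simpa using hx⟩

lemma ReachIn.symm {S : Finset V} {x y : V} (h : ReachIn G S x y) : ReachIn G S y x := by
  obtain ⟨p, hp⟩ := h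
  refine ⟨p.reverse, ?_⟩
  intro z hz
  rw [SimpleGraph.Walk.support_reverse, List.mem_reverse] at hz
  exact hp z hz

lemma ReachIn.trans {S : Finset V} {x y z : V} (h : ReachIn G S x y) (h' : ReachIn G S y z) :
    ReachIn G S x z := by
  obtain ⟨p, hp⟩ := h; obtain ⟨q, hq⟩ := h'
  refine ⟨p.append q, ?_⟩
  intro w hw
  rw [SimpleGraph.Walk.mem_support_append_iff] at hw
  exact hw.elim (hp w) (hq w)

lemma ReachIn.mono {S T : Finset V} (hST : S ⊆ T) {x y : V} (h : ReachIn G S x y) :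
    ReachIn G T x y := by
  obtain ⟨p, hp⟩ := h; exact ⟨p, fun z hz => hST (hp z hz)⟩

lemma reachIn_of_adj {S : Finset V} {x y : V} (h : G.Adj x y) (hx : x ∈ S) (hy : y ∈ S) :
    ReachIn G S x y :=
  ⟨.cons h .nil, by intro z hz; simp at hz; rcases hz with rfl | rfl <;> assumption⟩

/-- Distance within a finset `S` : length of a shortest walk supported in `S`. -/
noncomputable def dIn (G : SimpleGraph V) (S : Finset V) (x y : V) : ℕ :=
  sInf {n | ∃ p : G.Walk x y, p.length = n ∧ ∀ z ∈ p.support, z ∈ S}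

lemma dIn_le {S : Finset V} {x y : V} (p : G.Walk x y) (hp : ∀ z ∈ p.support, z ∈ S) :
    dIn G S x y ≤ p.length :=
  Nat.sInf_le ⟨p, rfl, hp⟩

lemma exists_shortest {S : Finset V} {x y : V} (h : ReachIn G S x y) :
    ∃ p : G.Walk x y, p.IsPath ∧ p.length = dIn G S x y ∧ ∀ z ∈ p.support, z ∈ S := by
  obtain ⟨p0, hp0⟩ := h
  have hne : {n | ∃ p : G.Walk x y, p.length = n ∧ ∀ z ∈ p.support, z ∈ S}.Nonempty :=
    ⟨p0.length, p0, rfl, hp0⟩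
  obtain ⟨q, hq, hqs⟩ := Nat.sInf_mem hne
  refine ⟨q.bypass, q.bypass_isPath, le_antisymm ?_ ?_, fun z hz => hqs z (q.support_bypass_subset hz)⟩
  · calc q.bypass.length ≤ q.length := q.length_bypass_le
      _ = dIn G S x y := hq
  · exact dIn_le q.bypass (fun z hz => hqs z (q.support_bypass_subset hz))

lemma dIn_self {S : Finset V} {x : V} (hx : x ∈ S) : dIn G S x x = 0 :=
  Nat.le_zero.mp (dIn_le .nil (by simpa using hx))

lemma one_le_dIn {S : Finset V} {x y : V} (h : ReachIn G S x y) (hne : x ≠ y) :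
    1 ≤ dIn G S x y := by
  obtain ⟨p, _, hlen, _⟩ := exists_shortest h
  rcases Nat.eq_zero_or_pos (dIn G S x y) with h0 | h1
  · exact absurd (p.eq_of_length_eq_zero (hlen.trans h0)) hne
  · exact h1

lemma dIn_triangle {S : Finset V} {x y z : V} (h : ReachIn G S x y) (h' : ReachIn G S y z) :
    dIn G S x z ≤ dIn G S x y + dIn G S y z := by
  obtain ⟨p, _, hp, hps⟩ := exists_shortest h
  obtain ⟨q, _, hq, hqs⟩ := exists_shortest h'
  calc dIn G S x z ≤ (p.append q).length := by
        refine dIn_le _ ?_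
        intro w hw
        rw [SimpleGraph.Walk.mem_support_append_iff] at hw
        exact hw.elim (hps w) (hqs w)
    _ = dIn G S x y + dIn G S y z := by rw [SimpleGraph.Walk.length_append, hp, hq]

lemma dIn_le_of_adj {S : Finset V} {x y z : V} (h : ReachIn G S x y) (hadj : G.Adj y z)
    (hz : z ∈ S) : dIn G S x z ≤ dIn G S x y + 1 :=
  le_trans (dIn_triangle h (reachIn_of_adj hadj h.right_mem hz))
    (by have h2 := dIn_le (S := S) (.cons hadj .nil)
          (by intro w hw; simp at hw; rcases hw with rfl | rfl; exacts [h.right_mem, hz])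
        simp only [SimpleGraph.Walk.length_cons, SimpleGraph.Walk.length_nil] at h2
        omega)

/-- Splitting a supported walk at a vertex on its support. -/
lemma dIn_split {S : Finset V} {x y c : V} (p : G.Walk x y) (hp : ∀ z ∈ p.support, z ∈ S)
    (hc : c ∈ p.support) :
    dIn G S x c + dIn G S c y ≤ p.length ∧ ReachIn G S x c ∧ ReachIn G S c y := by
  have h1 : ∀ z ∈ (p.takeUntil c hc).support, z ∈ S :=
    fun z hz => hp z (p.support_takeUntil_subset hc hz)
  have h2 : ∀ z ∈ (p.dropUntil c hc).support, z ∈ S :=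
    fun z hz => hp z (p.support_dropUntil_subset hc hz)
  refine ⟨?_, ⟨_, h1⟩, ⟨_, h2⟩⟩
  have hlen : (p.takeUntil c hc).length + (p.dropUntil c hc).length = p.length := by
    have := congrArg SimpleGraph.Walk.length (p.take_spec hc)
    rwa [SimpleGraph.Walk.length_append] at this
  have := dIn_le _ h1
  have := dIn_le _ h2
  omega


lemma exists_induce_walk {S : Set V} {a b : V} (p : G.Walk a b) (hp : ∀ z ∈ p.support, z ∈ S)
    (ha : a ∈ S) (hb : b ∈ S) :
    ∃ q : (G.induce S).Walk ⟨a, ha⟩ ⟨b, hb⟩, q.length = p.length := by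
  induction p with
  | nil => exact ⟨.nil, rfl⟩
  | @cons u w b' hadj tail ih =>
    have hw : w ∈ S := hp w (by simp)
    obtain ⟨q, hq⟩ := ih (fun z hz => hp z (by simp [hz])) hw hb
    exact ⟨.cons (by simpa using hadj) q, by simp [hq]⟩

lemma connected_induce_walks {S : Set V} (hne : S.Nonempty)
    (h : ∀ a ∈ S, ∀ b ∈ S, ∃ p : G.Walk a b, ∀ z ∈ p.support, z ∈ S) :
    (G.induce S).Connected := by
  rw [SimpleGraph.connected_iff]
  refine ⟨?_, ⟨⟨hne.choose, hne.choose_spec⟩⟩⟩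
  rintro ⟨a, ha⟩ ⟨b, hb⟩
  obtain ⟨p, hp⟩ := h a ha b hb
  obtain ⟨q, _⟩ := exists_induce_walk p hp ha hb
  exact ⟨q⟩

lemma connected_induce_hub {S : Set V} {x0 : V} (hx0 : x0 ∈ S)
    (h : ∀ a ∈ S, ∃ p : G.Walk a x0, ∀ z ∈ p.support, z ∈ S) :
    (G.induce S).Connected := by
  apply connected_induce_walks ⟨x0, hx0⟩
  intro a ha b hb
  obtain ⟨p, hp⟩ := h a ha
  obtain ⟨q, hq⟩ := h b hb
  refine ⟨p.append q.reverse, ?_⟩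
  intro z hz
  rw [SimpleGraph.Walk.mem_support_append_iff] at hz
  rcases hz with hz | hz
  · exact hp z hz
  · rw [SimpleGraph.Walk.support_reverse, List.mem_reverse] at hz
    exact hq z hz

/-- The key consequence of the block graph property: if `x` is adjacent to both `y` and `z`,
and `y`, `z` are joined by a walk avoiding `x`, then `y` and `z` are adjacent. -/
lemma adj_of_detour (hG : IsBlockGraph G) {x y z : V} (hxy : G.Adj x y) (hxz : G.Adj x z)
    (hne : y ≠ z) (w : G.Walk y z) (hw : x ∉ w.support) : G.Adj y z := by
  classical
  set p := w.bypass with hpdef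
  have hpPath : p.IsPath := w.bypass_isPath
  have hxp : x ∉ p.support := fun h => hw (w.support_bypass_subset h)
  set Sf : Finset V := insert x p.support.toFinset with hSf
  have hyp : y ∈ p.support := p.start_mem_support
  have hzp : z ∈ p.support := p.end_mem_support
  have hsub : ∀ a ∈ p.support, a ∈ Sf := by
    intro a ha; simp [hSf, List.mem_toFinset.mpr ha]
  have hxS : x ∈ Sf := by simp [hSf]
  have hyS : y ∈ Sf := hsub y hyp
  have hzS : z ∈ Sf := hsub z hzp
  -- cardinality
  have hcard : 3 ≤ (Sf : Set V).ncard := by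
    rw [Set.ncard_coe_finset]
    have hsub3 : ({x, y, z} : Finset V) ⊆ Sf := by
      intro a ha; simp only [Finset.mem_insert, Finset.mem_singleton] at ha
      rcases ha with rfl | rfl | rfl <;> assumption
    have h3 : ({x, y, z} : Finset V).card = 3 := by
      rw [Finset.card_insert_of_notMem (by simp [hxy.ne, hxz.ne]),
        Finset.card_insert_of_notMem (by simp [hne]), Finset.card_singleton]
    calc 3 = ({x, y, z} : Finset V).card := h3.symm
      _ ≤ Sf.card := Finset.card_le_card hsub3
  have hnodup : p.support.Nodup := hpPath.support_nodup
  -- connectivity of the induced graph on Sf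
  have hconnS : (G.induce (Sf : Set V)).Connected := by
    apply connected_induce_hub (x0 := y) (Finset.mem_coe.mpr hyS)
    intro a ha
    rw [Finset.mem_coe, hSf, Finset.mem_insert] at ha
    rcases ha with rfl | ha
    · refine ⟨.cons hxy .nil, ?_⟩
      intro z' hz'
      simp at hz'
      rcases hz' with rfl | hz'
      · exact Finset.mem_coe.mpr hxS
      · subst hz'; exact Finset.mem_coe.mpr hyS
    · rw [List.mem_toFinset] at ha
      refine ⟨(p.takeUntil a ha).reverse, ?_⟩
      intro z' hz'
      rw [SimpleGraph.Walk.support_reverse, List.mem_reverse] at hz'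
      exact Finset.mem_coe.mpr (hsub z' (p.support_takeUntil_subset ha hz'))
  -- connectivity after deleting any vertex
  have hdel : ∀ v ∈ (Sf : Set V), (G.induce ((Sf : Set V) \ {v})).Connected := by
    intro v hv
    have hcoe : (Sf : Set V) \ {v} = ((Sf.erase v : Finset V) : Set V) := by
      rw [Finset.coe_erase]
    rw [hcoe]
    have hmem' : ∀ {a : V}, a ∈ ((Sf.erase v : Finset V) : Set V) ↔ a ≠ v ∧ a ∈ Sf := by
      intro a; rw [Finset.mem_coe, Finset.mem_erase]
    by_cases hvx : v = x
    · subst hvx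
      apply connected_induce_hub (x0 := y)
        (hmem'.mpr ⟨hxy.ne.symm, hyS⟩)
      intro a ha
      obtain ⟨hav, haS⟩ := hmem'.mp ha
      have hap : a ∈ p.support := by
        rw [hSf, Finset.mem_insert] at haS
        rcases haS with rfl | haS
        · exact absurd rfl hav
        · exact List.mem_toFinset.mp haS
      refine ⟨(p.takeUntil a hap).reverse, ?_⟩
      intro z' hz'
      rw [SimpleGraph.Walk.support_reverse, List.mem_reverse] at hz'
      have hz'p : z' ∈ p.support := p.support_takeUntil_subset hap hz'
      exact hmem'.mpr ⟨fun h => hxp (h ▸ hz'p), hsub z' hz'p⟩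
    · apply connected_induce_hub (x0 := x) (hmem'.mpr ⟨fun h => hvx h.symm, hxS⟩)
      intro a ha
      obtain ⟨hav, haS⟩ := hmem'.mp ha
      by_cases hax : a = x
      · subst hax; exact ⟨.nil, by intro z' hz'; simp at hz'; subst hz'; exact ha⟩
      · have hap : a ∈ p.support := by
          rw [hSf, Finset.mem_insert] at haS
          rcases haS with rfl | haS
          · exact absurd rfl hax
          · exact List.mem_toFinset.mp haS
        have hsplit : (p.takeUntil a hap).support ++ (p.dropUntil a hap).support.tail
            = p.support := by
          rw [← SimpleGraph.Walk.support_append, p.take_spec hap]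
        by_cases hvt : v ∈ (p.takeUntil a hap).support
        · -- use the second part of the walk, then jump to x from z
          have hvd : v ∉ (p.dropUntil a hap).support := by
            have hdisj : (p.takeUntil a hap).support.Disjoint
                (p.dropUntil a hap).support.tail := by
              have h2 := hnodup
              rw [← hsplit] at h2
              exact List.disjoint_of_nodup_append h2
            intro hmem
            rw [(p.dropUntil a hap).support_eq_cons, List.mem_cons] at hmem
            rcases hmem with rfl | hmem
            · exact hav rfl
            · exact hdisj hvt hmem
          refine ⟨(p.dropUntil a hap).append (.cons hxz.symm .nil), ?_⟩
          intro z' hz'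
          rw [SimpleGraph.Walk.mem_support_append_iff] at hz'
          rcases hz' with hz' | hz'
          · exact hmem'.mpr ⟨fun h => hvd (h ▸ hz'),
              hsub z' (p.support_dropUntil_subset hap hz')⟩
          · simp at hz'
            rcases hz' with rfl | hz'
            · exact hmem'.mpr ⟨fun h => hvd (h ▸ (p.dropUntil a hap).end_mem_support),
                hsub z' (p.support_dropUntil_subset hap (p.dropUntil a hap).end_mem_support)⟩
            · subst hz'
              exact hmem'.mpr ⟨fun h => hvx h.symm, hxS⟩
        · -- use the reversed first part of the walk, then jump to x from y
          refine ⟨(p.takeUntil a hap).reverse.append (.cons hxy.symm .nil), ?_⟩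
          intro z' hz'
          rw [SimpleGraph.Walk.mem_support_append_iff] at hz'
          rcases hz' with hz' | hz'
          · rw [SimpleGraph.Walk.support_reverse, List.mem_reverse] at hz'
            exact hmem'.mpr ⟨fun h => hvt (h ▸ hz'),
              hsub z' (p.support_takeUntil_subset hap hz')⟩
          · simp at hz'
            rcases hz' with rfl | hz'
            · exact hmem'.mpr ⟨fun h => hvt (h ▸ (p.takeUntil a hap).start_mem_support),
                hsub z' (p.support_takeUntil_subset hap (p.takeUntil a hap).start_mem_support)⟩
            · subst hz'
              exact hmem'.mpr ⟨fun h => hvx h.symm, hxS⟩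
  have hclq := hG (Sf : Set V) hcard hconnS hdel
  exact hclq (Finset.mem_coe.mpr hyS) (Finset.mem_coe.mpr hzS) hne


/-- If `x` is at distance at least 2 from `u` inside `C`, there is a neighbour `m` of `x`,
one step closer to `u`, whose removal from `C` disconnects `u` from `x`. -/
lemma exists_good_pred (hG : IsBlockGraph G) {C : Finset V} {u x : V}
    (hu : u ∈ C) (hr : ReachIn G C u x) (hd : 2 ≤ dIn G C u x) :
    ∃ m, G.Adj m x ∧ m ∈ C ∧ m ≠ u ∧ dIn G C u m + 1 = dIn G C u x ∧
      (∃ w1 : G.Walk u m, (∀ z ∈ w1.support, z ∈ C) ∧ x ∉ w1.support ∧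
        w1.length + 1 = dIn G C u x) ∧
      ¬ ReachIn G (C.erase m) u x := by
  obtain ⟨p, hpath, hplen, hpsup⟩ := exists_shortest hr
  have hxu : x ≠ u := by
    intro h
    rw [h, dIn_self hu] at hd
    omega
  set r := p.reverse with hrdef
  have hrpath : r.IsPath := hpath.reverse
  have hrsup : ∀ z ∈ r.support, z ∈ C := by
    intro z hz
    rw [hrdef, SimpleGraph.Walk.support_reverse, List.mem_reverse] at hz
    exact hpsup z hz
  have hrlen : r.length = dIn G C u x := by
    rw [hrdef, SimpleGraph.Walk.length_reverse, hplen]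
  obtain ⟨m, hxm, r1, hr1⟩ := SimpleGraph.Walk.exists_eq_cons_of_ne hxu r
  have hr1path : r1.IsPath := by
    rw [hr1] at hrpath
    exact hrpath.of_cons
  have hr1len : r1.length + 1 = dIn G C u x := by
    rw [hr1, SimpleGraph.Walk.length_cons] at hrlen
    omega
  have hr1sup : ∀ z ∈ r1.support, z ∈ C := by
    intro z hz
    exact hrsup z (by rw [hr1, SimpleGraph.Walk.support_cons]; exact List.mem_cons_of_mem _ hz)
  have hxr1 : x ∉ r1.support := by
    rw [hr1] at hrpath
    have := hrpath.support_nodup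
    rw [SimpleGraph.Walk.support_cons, List.nodup_cons] at this
    exact this.1
  have hmu : m ≠ u := by
    intro h
    subst h
    have hnil : (⟨r1, hr1path⟩ : G.Path m m) = SimpleGraph.Path.nil :=
      SimpleGraph.Path.loop_eq _
    have hlen0 : r1.length = 0 := by
      have := congrArg (fun pp : G.Path m m => (pp : G.Walk m m).length) hnil
      simpa using this
    omega
  obtain ⟨q, hmq, r2, hr2⟩ := SimpleGraph.Walk.exists_eq_cons_of_ne hmu r1
  have hr2len : r2.length + 2 = dIn G C u x := by
    rw [hr2, SimpleGraph.Walk.length_cons] at hr1len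
    omega
  have hr2sup : ∀ z ∈ r2.support, z ∈ C := by
    intro z hz
    exact hr1sup z (by rw [hr2, SimpleGraph.Walk.support_cons]; exact List.mem_cons_of_mem _ hz)
  have hmr2 : m ∉ r2.support := by
    rw [hr2] at hr1path
    have := hr1path.support_nodup
    rw [SimpleGraph.Walk.support_cons, List.nodup_cons] at this
    exact this.1
  have hmC : m ∈ C := hr1sup m r1.start_mem_support
  have hqC : q ∈ C := hr2sup q r2.start_mem_support
  have hrum : ReachIn G C u m := ⟨r1.reverse, by
    intro z hz
    rw [SimpleGraph.Walk.support_reverse, List.mem_reverse] at hz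
    exact hr1sup z hz⟩
  have hruq : ReachIn G C u q := ⟨r2.reverse, by
    intro z hz
    rw [SimpleGraph.Walk.support_reverse, List.mem_reverse] at hz
    exact hr2sup z hz⟩
  have hdm_le : dIn G C u m ≤ r1.length := by
    have := dIn_le (S := C) r1.reverse (by
      intro z hz
      rw [SimpleGraph.Walk.support_reverse, List.mem_reverse] at hz
      exact hr1sup z hz)
    rwa [SimpleGraph.Walk.length_reverse] at this
  have hdq_le : dIn G C u q ≤ r2.length := by
    have := dIn_le (S := C) r2.reverse (by
      intro z hz
      rw [SimpleGraph.Walk.support_reverse, List.mem_reverse] at hz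
      exact hr2sup z hz)
    rwa [SimpleGraph.Walk.length_reverse] at this
  have hxC : x ∈ C := hr.right_mem
  have hdx_lem : dIn G C u x ≤ dIn G C u m + 1 := dIn_le_of_adj hrum hxm.symm hxC
  have hdm_lem : dIn G C u m ≤ dIn G C u q + 1 := dIn_le_of_adj hruq hmq.symm hmC
  have hum : dIn G C u m + 1 = dIn G C u x := by omega
  have huq : dIn G C u q + 2 = dIn G C u x := by omega
  have hxq : x ≠ q := by
    intro h
    rw [← h] at huq
    omega
  refine ⟨m, hxm.symm, hmC, hmu, hum, ⟨r1.reverse, ?_, ?_, ?_⟩, ?_⟩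
  · intro z hz
    rw [SimpleGraph.Walk.support_reverse, List.mem_reverse] at hz
    exact hr1sup z hz
  · rw [SimpleGraph.Walk.support_reverse, List.mem_reverse]
    exact hxr1
  · rw [SimpleGraph.Walk.length_reverse]; exact hr1len
  · rintro ⟨w, hwsup⟩
    have hwm : m ∉ w.support := fun h => (Finset.mem_erase.mp (hwsup m h)).1 rfl
    have hmP : m ∉ (w.reverse.append r2.reverse).support := by
      intro h
      rw [SimpleGraph.Walk.mem_support_append_iff] at h
      rcases h with h | h
      · rw [SimpleGraph.Walk.support_reverse, List.mem_reverse] at h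
        exact hwm h
      · rw [SimpleGraph.Walk.support_reverse, List.mem_reverse] at h
        exact hmr2 h
    have hadjxq : G.Adj x q :=
      adj_of_detour hG hxm.symm hmq hxq (w.reverse.append r2.reverse) hmP
    have : dIn G C u x ≤ dIn G C u q + 1 := dIn_le_of_adj hruq hadjxq.symm hxC
    omega


lemma connected_and_diam_le_two {S : Finset V} (hne : S.Nonempty)
    (h : ∀ a ∈ S, ∀ b ∈ S, ∃ p : G.Walk a b, (∀ z ∈ p.support, z ∈ S) ∧ p.length ≤ 2) :
    (G.induce (S : Set V)).Connected ∧ (G.induce (S : Set V)).diam ≤ 2 := by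
  have hconn : (G.induce (S : Set V)).Connected := by
    apply connected_induce_walks ⟨hne.choose, Finset.mem_coe.mpr hne.choose_spec⟩
    intro a ha b hb
    obtain ⟨p, hp, _⟩ := h a (Finset.mem_coe.mp ha) b (Finset.mem_coe.mp hb)
    exact ⟨p, fun z hz => Finset.mem_coe.mpr (hp z hz)⟩
  refine ⟨hconn, ?_⟩
  have hed : (G.induce (S : Set V)).ediam ≤ 2 := by
    rw [SimpleGraph.ediam_le_iff]
    rintro ⟨a, ha⟩ ⟨b, hb⟩
    obtain ⟨p, hp, hlen⟩ := h a (Finset.mem_coe.mp ha) b (Finset.mem_coe.mp hb)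
    obtain ⟨q, hq⟩ := exists_induce_walk p (fun z hz => Finset.mem_coe.mpr (hp z hz)) ha hb
    calc (G.induce (S : Set V)).edist ⟨a, ha⟩ ⟨b, hb⟩ ≤ q.length := SimpleGraph.edist_le q
      _ ≤ 2 := by
          rw [hq]
          exact_mod_cast hlen
  calc (G.induce (S : Set V)).diam = (G.induce (S : Set V)).ediam.toNat := rfl
    _ ≤ (2 : ℕ∞).toNat := ENat.toNat_le_toNat hed (by simp)
    _ = 2 := rfl

lemma reachIn_of_connected {C : Finset V} (hconn : (G.induce (C : Set V)).Connected)
    {x y : V} (hx : x ∈ C) (hy : y ∈ C) : ReachIn G C x y := by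
  obtain ⟨p⟩ := hconn.preconnected ⟨x, Finset.mem_coe.mpr hx⟩ ⟨y, Finset.mem_coe.mpr hy⟩
  let f : G.induce (C : Set V) →g G := ⟨Subtype.val, fun {a b} hab => hab⟩
  refine ⟨p.map f, ?_⟩
  intro z hz
  rw [SimpleGraph.Walk.support_map, List.mem_map] at hz
  obtain ⟨z', _, rfl⟩ := hz
  exact Finset.mem_coe.mp z'.2

lemma rat_key {E1 E2 n1 n2 s : ℚ} (ha : 2 ≤ n1) (hs : 1 ≤ s) (hsn : s + 1 ≤ n2)
    (hE1 : 2 * n1 - 2 ≤ E1) (hE2 : s * s - s ≤ E2) :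
    (E1 + E2 + 2 * s) / (n1 + n2) ≤ E1 / n1 + E2 / n2 := by
  have hn1 : (0:ℚ) < n1 := by linarith
  have hn2 : (0:ℚ) < n2 := by linarith
  have hx : (0:ℚ) ≤ n1 - 2 := by linarith
  have hy : (0:ℚ) ≤ s - 1 := by linarith
  have hz : (0:ℚ) ≤ n2 - s - 1 := by linarith
  have hP : 0 ≤ (2*n1-2)*(n2*n2) + (s*s-s)*(n1*n1) - 2*s*n1*n2 := by
    have hid : (2*n1-2)*(n2*n2) + (s*s-s)*(n1*n1) - 2*s*n1*n2
        = 4*(n2-s-1) + 2*((n2-s-1)*(n2-s-1)) + 2*((s-1)*(s-1)) + 4*(n1-2)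
          + 6*((n1-2)*(n2-s-1)) + 2*((n1-2)*((n2-s-1)*(n2-s-1)))
          + 6*((n1-2)*(s-1)) + 2*((n1-2)*((s-1)*(n2-s-1)))
          + 4*((n1-2)*((s-1)*(s-1))) + ((n1-2)*(n1-2))*(s-1)
          + ((n1-2)*(n1-2))*((s-1)*(s-1)) := by ring
    rw [hid]
    have m1 := mul_nonneg hz hz
    have m2 := mul_nonneg hy hy
    have m3 := mul_nonneg hx hz
    have m4 := mul_nonneg hx m1
    have m5 := mul_nonneg hx hy
    have m6 := mul_nonneg hx (mul_nonneg hy hz)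
    have m7 := mul_nonneg hx m2
    have m8 := mul_nonneg (mul_nonneg hx hx) hy
    have m9 := mul_nonneg (mul_nonneg hx hx) m2
    linarith
  rw [div_add_div _ _ (ne_of_gt hn1) (ne_of_gt hn2),
    div_le_div_iff₀ (by linarith) (by positivity)]
  nlinarith [mul_nonneg (sub_nonneg.mpr hE1) (mul_nonneg hn2.le hn2.le),
             mul_nonneg (sub_nonneg.mpr hE2) (mul_nonneg hn1.le hn1.le), hP]


set_option maxHeartbeats 2000000 in
lemma main_lemma {V : Type*} [Fintype V] [DecidableEq V] {G : SimpleGraph V}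
    [DecidableRel G.Adj] (hG : IsBlockGraph G) :
    ∀ (n : ℕ) (C : Finset V), C.card ≤ n → C.Nonempty →
      (∀ x ∈ C, ∀ y ∈ C, ReachIn G C x y) →
      ∃ Q : Finpartition C,
        (∀ D ∈ Q.parts, (G.induce (D : Set V)).Connected ∧ (G.induce (D : Set V)).diam ≤ 2) ∧
        uw G C ≤ ∑ D ∈ Q.parts, uw G D := by
  intro n
  induction n with
  | zero =>
    intro C hcard hne _
    rw [Nat.le_zero, Finset.card_eq_zero] at hcard
    exact absurd hcard hne.ne_empty
  | succ k ih =>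
    intro C hcard hne hreach
    classical
    by_cases hdle : ∀ x ∈ C, ∀ y ∈ C, dIn G C x y ≤ 2
    · -- base case : the whole coalition has diameter at most 2
      have hCd := connected_and_diam_le_two hne (fun a ha b hb => by
        obtain ⟨p, _, hplen, hpsup⟩ := exists_shortest (hreach a ha b hb)
        exact ⟨p, hpsup, by rw [hplen]; exact hdle a ha b hb⟩)
      refine ⟨Finpartition.indiscrete (by simpa using hne.ne_empty), ?_, ?_⟩
      · intro D hD
        rw [Finpartition.indiscrete_parts, Finset.mem_singleton] at hD
        subst hD
        exact hCd
      · rw [Finpartition.indiscrete_parts, Finset.sum_singleton]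
    · -- split case
      push_neg at hdle
      obtain ⟨u, hu, v, hv, hdgt⟩ := hdle
      have hd3 : 3 ≤ dIn G C u v := by omega
      -- a good vertex exists
      obtain ⟨m0, hm0vAdj, hm0C, hm0u, hm0d, _, hm0bad⟩ :=
        exists_good_pred hG hu (hreach u hu v hv) (by omega)
      set P : V → Prop := fun c => c ≠ u ∧ ∃ x ∈ C, x ≠ c ∧ ¬ ReachIn G (C.erase c) u x
        with hPdef
      have hm0P : m0 ∈ C.filter P := by
        rw [Finset.mem_filter]
        exact ⟨hm0C, hm0u, v, hv, fun h => hm0vAdj.ne h.symm, hm0bad⟩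
      obtain ⟨c, hcmem, hcmax⟩ :=
        Finset.exists_max_image (C.filter P) (fun w => dIn G C u w) ⟨m0, hm0P⟩
      obtain ⟨hcC, hcu, x0, hx0C, hx0c, hx0bad⟩ :
          c ∈ C ∧ c ≠ u ∧ ∃ x ∈ C, x ≠ c ∧ ¬ ReachIn G (C.erase c) u x := by
        have h' := Finset.mem_filter.mp hcmem
        exact ⟨h'.1, h'.2.1, h'.2.2⟩
      have hdc2 : 2 ≤ dIn G C u c := by
        have h1 := hcmax m0 hm0P
        omega
      set C2 := (C.erase c).filter (fun x => ReachIn G (C.erase c) u x) with hC2def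
      set C1 := C \ C2 with hC1def
      have hC2sub : C2 ⊆ C := fun x hx => Finset.mem_of_mem_erase (Finset.mem_filter.mp hx).1
      have hdisj : Disjoint C1 C2 := Finset.sdiff_disjoint
      have hunion : C1 ∪ C2 = C := Finset.sdiff_union_of_subset hC2sub
      have huec : u ∈ C.erase c := Finset.mem_erase.mpr ⟨Ne.symm hcu, hu⟩
      have huC2 : u ∈ C2 := Finset.mem_filter.mpr ⟨huec, ReachIn.refl huec⟩
      have hcC2 : c ∉ C2 := fun h => (Finset.mem_erase.mp (Finset.mem_filter.mp h).1).1 rfl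
      have hcC1 : c ∈ C1 := Finset.mem_sdiff.mpr ⟨hcC, hcC2⟩
      have hC1sub : C1 ⊆ C := Finset.sdiff_subset
      have hnotreach : ∀ x ∈ C1, x ≠ c → ¬ ReachIn G (C.erase c) u x := by
        intro x hx hxc hr
        have hx2 : x ∈ C2 :=
          Finset.mem_filter.mpr ⟨Finset.mem_erase.mpr ⟨hxc, hC1sub hx⟩, hr⟩
        exact (Finset.mem_sdiff.mp hx).2 hx2
      have hthrough : ∀ x ∈ C1, x ≠ c → ∀ (w : G.Walk u x), (∀ z ∈ w.support, z ∈ C) →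
          c ∈ w.support := by
        intro x hx hxc w hwsup
        by_contra hcw
        exact hnotreach x hx hxc
          ⟨w, fun z hz => Finset.mem_erase.mpr ⟨fun h => hcw (h ▸ hz), hwsup z hz⟩⟩
      -- every element of C1 other than c is adjacent to c
      have hadjC1 : ∀ x ∈ C1, x ≠ c → G.Adj c x := by
        intro x hx hxc
        have hxC : x ∈ C := hC1sub hx
        have hrux : ReachIn G C u x := hreach u hu x hxC
        obtain ⟨p, hpath, hplen, hpsup⟩ := exists_shortest hrux
        have hcp : c ∈ p.support := hthrough x hx hxc p hpsup
        obtain ⟨hsplitlen, hruc', hrcx⟩ := dIn_split p hpsup hcp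
        have hcx1 : 1 ≤ dIn G C c x := one_le_dIn hrcx (fun h => hxc h.symm)
        have hdx2 : 2 ≤ dIn G C u x := by omega
        obtain ⟨m, hmx, hmC, hmu, hdm, ⟨w1, hw1sup, hxw1, hw1len⟩, hmbad⟩ :=
          exists_good_pred hG hu hrux hdx2
        by_cases hmc : m = c
        · exact hmc ▸ hmx
        · exfalso
          have hmgood : m ∈ C.filter P := Finset.mem_filter.mpr
            ⟨hmC, hmu, x, hxC, fun h => hmx.ne h.symm, hmbad⟩
          have hle : dIn G C u m ≤ dIn G C u c := hcmax m hmgood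
          have hwx : ∀ z ∈ (w1.append (SimpleGraph.Walk.cons hmx .nil)).support, z ∈ C := by
            intro z hz
            rw [SimpleGraph.Walk.mem_support_append_iff] at hz
            rcases hz with hz | hz
            · exact hw1sup z hz
            · simp at hz
              rcases hz with rfl | rfl
              · exact hmC
              · exact hxC
          have hcw := hthrough x hx hxc _ hwx
          rw [SimpleGraph.Walk.mem_support_append_iff] at hcw
          have hcw1 : c ∈ w1.support := by
            rcases hcw with h | h
            · exact h
            · exfalso
              simp at h
              rcases h with h | h
              · exact hmc h.symm
              · exact hxc h.symm
          obtain ⟨hsplit2, _, hrcm⟩ := dIn_split w1 hw1sup hcw1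
          have h1cm : 1 ≤ dIn G C c m := one_le_dIn hrcm (fun h => hmc h.symm)
          omega
      -- K : the neighbours of c inside C2, a clique
      set K := C2.filter (fun y => G.Adj c y) with hKdef
      have hKsub : K ⊆ C2 := Finset.filter_subset _ _
      have hKclique : ∀ y ∈ K, ∀ z ∈ K, y ≠ z → G.Adj y z := by
        intro y hy z hz hyz
        obtain ⟨hyC2, hcy⟩ := Finset.mem_filter.mp hy
        obtain ⟨hzC2, hcz⟩ := Finset.mem_filter.mp hz
        have hry := (Finset.mem_filter.mp hyC2).2
        have hrz := (Finset.mem_filter.mp hzC2).2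
        obtain ⟨w, hwsup⟩ := hry.symm.trans hrz
        exact adj_of_detour hG hcy hcz hyz w
          (fun h => (Finset.mem_erase.mp (hwsup c h)).1 rfl)
      have hcu_nadj : ¬ G.Adj c u := by
        intro h
        have hle1 := dIn_le (S := C) (SimpleGraph.Walk.cons h.symm .nil) (by
          intro z hz
          simp at hz
          rcases hz with rfl | rfl
          · exact hu
          · exact hcC)
        simp only [SimpleGraph.Walk.length_cons, SimpleGraph.Walk.length_nil] at hle1
        omega
      have huK : u ∉ K := fun h => hcu_nadj (Finset.mem_filter.mp h).2
      have hKne : K.Nonempty := by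
        obtain ⟨m', hm'c, hm'C, _, _, ⟨w1', hw1sup', hcw1', _⟩, _⟩ :=
          exists_good_pred hG hu (hreach u hu c hcC) hdc2
        have hm'C2 : m' ∈ C2 := by
          refine Finset.mem_filter.mpr ⟨Finset.mem_erase.mpr ⟨hm'c.ne, hm'C⟩, ⟨w1', ?_⟩⟩
          intro z hz
          exact Finset.mem_erase.mpr ⟨fun h => hcw1' (h ▸ hz), hw1sup' z hz⟩
        exact ⟨m', Finset.mem_filter.mpr ⟨hm'C2, hm'c.symm⟩⟩
      -- C2 is internally connected
      have hC2reach_u : ∀ a ∈ C2, ReachIn G C2 u a := by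
        intro a ha
        obtain ⟨w, hwsup⟩ := (Finset.mem_filter.mp ha).2
        refine ⟨w, ?_⟩
        intro z hz
        exact Finset.mem_filter.mpr ⟨hwsup z hz,
          ⟨w.takeUntil z hz, fun z' hz' => hwsup z' (w.support_takeUntil_subset hz hz')⟩⟩
      have hC2reach : ∀ a ∈ C2, ∀ b ∈ C2, ReachIn G C2 a b :=
        fun a ha b hb => (hC2reach_u a ha).symm.trans (hC2reach_u b hb)
      -- cardinalities
      have hx0C1 : x0 ∈ C1 :=
        Finset.mem_sdiff.mpr ⟨hx0C, fun h => hx0bad (Finset.mem_filter.mp h).2⟩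
      have h2n1 : 2 ≤ C1.card :=
        Finset.one_lt_card.mpr ⟨c, hcC1, x0, hx0C1, fun h => hx0c h.symm⟩
      have hs1 : 1 ≤ K.card := Finset.card_pos.mpr hKne
      have hsn2 : K.card + 1 ≤ C2.card := by
        have hsub' : K ⊆ C2.erase u :=
          fun y hy => Finset.mem_erase.mpr ⟨fun h => huK (h ▸ hy), hKsub hy⟩
        have hcardle := Finset.card_le_card hsub'
        rw [Finset.card_erase_of_mem huC2] at hcardle
        have hn2pos : 1 ≤ C2.card := Finset.card_pos.mpr ⟨u, huC2⟩
        omega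
      -- all edges between C1 and C2 are incident to c
      have hcross : ∀ a ∈ C1, ∀ b ∈ C2, G.Adj a b → a = c := by
        intro a ha b hb hab
        by_contra hac
        refine hnotreach a ha hac ?_
        obtain ⟨w, hwsup⟩ := (Finset.mem_filter.mp hb).2
        refine ⟨w.append (SimpleGraph.Walk.cons hab.symm .nil), ?_⟩
        intro z hz
        rw [SimpleGraph.Walk.mem_support_append_iff] at hz
        rcases hz with hz | hz
        · exact hwsup z hz
        · simp at hz
          rcases hz with rfl | rfl
          · exact (Finset.mem_filter.mp hb).1
          · exact Finset.mem_erase.mpr ⟨hac, hC1sub ha⟩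
      have hprod1 : ((C1 ×ˢ C2).filter fun p => G.Adj p.1 p.2) = {c} ×ˢ K := by
        ext ⟨a, b⟩
        simp only [Finset.mem_filter, Finset.mem_product, Finset.mem_singleton]
        constructor
        · rintro ⟨⟨ha, hb⟩, hab⟩
          have hac := hcross a ha b hb hab
          subst hac
          exact ⟨rfl, Finset.mem_filter.mpr ⟨hb, hab⟩⟩
        · rintro ⟨rfl, hb⟩
          obtain ⟨hbC2, hcb⟩ := Finset.mem_filter.mp hb
          exact ⟨⟨hcC1, hbC2⟩, hcb⟩
      have hprod2 : ((C2 ×ˢ C1).filter fun p => G.Adj p.1 p.2) = K ×ˢ {c} := by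
        ext ⟨a, b⟩
        simp only [Finset.mem_filter, Finset.mem_product, Finset.mem_singleton]
        constructor
        · rintro ⟨⟨ha, hb⟩, hab⟩
          have hbc := hcross b hb a ha hab.symm
          subst hbc
          exact ⟨Finset.mem_filter.mpr ⟨ha, hab.symm⟩, rfl⟩
        · rintro ⟨ha, rfl⟩
          obtain ⟨haC2, hca⟩ := Finset.mem_filter.mp ha
          exact ⟨⟨haC2, hcC1⟩, hca.symm⟩
      -- split of the ordered pair count
      have hdfst : ∀ (A B A' B' : Finset V), Disjoint A A' →
          Disjoint ((A ×ˢ B).filter fun p => G.Adj p.1 p.2)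
            ((A' ×ˢ B').filter fun p => G.Adj p.1 p.2) := by
        intro A B A' B' hAA
        rw [Finset.disjoint_left]
        rintro ⟨a, b⟩ h1 h2
        have ha1 := (Finset.mem_product.mp (Finset.mem_filter.mp h1).1).1
        have ha2 := (Finset.mem_product.mp (Finset.mem_filter.mp h2).1).1
        exact Finset.disjoint_left.mp hAA ha1 ha2
      have hdsnd : ∀ (A B A' B' : Finset V), Disjoint B B' →
          Disjoint ((A ×ˢ B).filter fun p => G.Adj p.1 p.2)
            ((A' ×ˢ B').filter fun p => G.Adj p.1 p.2) := by
        intro A B A' B' hBB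
        rw [Finset.disjoint_left]
        rintro ⟨a, b⟩ h1 h2
        have hb1 := (Finset.mem_product.mp (Finset.mem_filter.mp h1).1).2
        have hb2 := (Finset.mem_product.mp (Finset.mem_filter.mp h2).1).2
        exact Finset.disjoint_left.mp hBB hb1 hb2
      have hWsplit : ((C ×ˢ C).filter fun p => G.Adj p.1 p.2).card
          = ((C1 ×ˢ C1).filter fun p => G.Adj p.1 p.2).card
            + ((C2 ×ˢ C2).filter fun p => G.Adj p.1 p.2).card + 2 * K.card := by
        have hPeq : (C ×ˢ C)
            = (C1 ×ˢ C1) ∪ ((C2 ×ˢ C2) ∪ ((C1 ×ˢ C2) ∪ (C2 ×ˢ C1))) := by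
          ext ⟨a, b⟩
          simp only [Finset.mem_product, Finset.mem_union, ← hunion]
          tauto
        have hd3 : Disjoint ((C1 ×ˢ C2).filter fun p => G.Adj p.1 p.2)
            ((C2 ×ˢ C1).filter fun p => G.Adj p.1 p.2) := hdfst _ _ _ _ hdisj
        have hd2 : Disjoint ((C2 ×ˢ C2).filter fun p => G.Adj p.1 p.2)
            (((C1 ×ˢ C2).filter fun p => G.Adj p.1 p.2)
              ∪ ((C2 ×ˢ C1).filter fun p => G.Adj p.1 p.2)) :=
          Finset.disjoint_union_right.mpr
            ⟨hdfst _ _ _ _ hdisj.symm, hdsnd _ _ _ _ hdisj.symm⟩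
        have hd1 : Disjoint ((C1 ×ˢ C1).filter fun p => G.Adj p.1 p.2)
            (((C2 ×ˢ C2).filter fun p => G.Adj p.1 p.2)
              ∪ (((C1 ×ˢ C2).filter fun p => G.Adj p.1 p.2)
                ∪ ((C2 ×ˢ C1).filter fun p => G.Adj p.1 p.2))) :=
          Finset.disjoint_union_right.mpr ⟨hdfst _ _ _ _ hdisj,
            Finset.disjoint_union_right.mpr ⟨hdsnd _ _ _ _ hdisj, hdfst _ _ _ _ hdisj⟩⟩
        rw [hPeq, Finset.filter_union, Finset.filter_union, Finset.filter_union,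
          Finset.card_union_of_disjoint hd1, Finset.card_union_of_disjoint hd2,
          Finset.card_union_of_disjoint hd3, hprod1, hprod2, Finset.card_product,
          Finset.card_product, Finset.card_singleton]
        ring
      -- lower bound on edges inside C1
      have hWC1 : 2 * C1.card ≤ ((C1 ×ˢ C1).filter fun p => G.Adj p.1 p.2).card + 2 := by
        have hsubE : ({c} ×ˢ (C1.erase c)) ∪ ((C1.erase c) ×ˢ {c})
            ⊆ (C1 ×ˢ C1).filter fun p => G.Adj p.1 p.2 := by
          rintro ⟨a, b⟩ hab
          rw [Finset.mem_union] at hab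
          rcases hab with hab | hab
          · rw [Finset.mem_product, Finset.mem_singleton] at hab
            obtain ⟨rfl, hb⟩ := hab
            obtain ⟨hbne, hbC1⟩ := Finset.mem_erase.mp hb
            exact Finset.mem_filter.mpr
              ⟨Finset.mem_product.mpr ⟨hcC1, hbC1⟩, hadjC1 b hbC1 hbne⟩
          · rw [Finset.mem_product, Finset.mem_singleton] at hab
            obtain ⟨ha, rfl⟩ := hab
            obtain ⟨hane, haC1⟩ := Finset.mem_erase.mp ha
            exact Finset.mem_filter.mpr
              ⟨Finset.mem_product.mpr ⟨haC1, hcC1⟩, (hadjC1 a haC1 hane).symm⟩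
        have hcardE : (({c} ×ˢ (C1.erase c)) ∪ ((C1.erase c) ×ˢ {c})).card
            = 2 * (C1.card - 1) := by
          rw [Finset.card_union_of_disjoint (by
            rw [Finset.disjoint_left]
            rintro ⟨a, b⟩ h1 h2
            rw [Finset.mem_product, Finset.mem_singleton] at h1 h2
            exact (Finset.mem_erase.mp h2.1).1 h1.1)]
          rw [Finset.card_product, Finset.card_product, Finset.card_singleton,
            Finset.card_erase_of_mem hcC1]
          omega
        have hle' := Finset.card_le_card hsubE
        omega
      -- lower bound on edges inside C2
      have hWC2 : K.card * K.card
          ≤ ((C2 ×ˢ C2).filter fun p => G.Adj p.1 p.2).card + K.card := by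
        have hsubE : K.offDiag ⊆ (C2 ×ˢ C2).filter fun p => G.Adj p.1 p.2 := by
          rintro ⟨a, b⟩ hab
          obtain ⟨ha, hb, hne'⟩ := Finset.mem_offDiag.mp hab
          exact Finset.mem_filter.mpr
            ⟨Finset.mem_product.mpr ⟨hKsub ha, hKsub hb⟩, hKclique a ha b hb hne'⟩
        have hle' := Finset.card_le_card hsubE
        rw [Finset.offDiag_card] at hle'
        omega
      -- recursion on C2
      have hcards : C1.card + C2.card = C.card := by
        rw [← Finset.card_union_of_disjoint hdisj, hunion]
      have hC2ne : C2.Nonempty := ⟨u, huC2⟩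
      obtain ⟨Q2, hQ2parts, hQ2sum⟩ := ih C2 (by omega) hC2ne hC2reach
      -- assemble the partition
      have hC1ne : C1.Nonempty := ⟨c, hcC1⟩
      have hC1nb : C1 ≠ (⊥ : Finset V) := by simpa using hC1ne.ne_empty
      have hsupeq : C2 ⊔ C1 = C := by
        rw [Finset.sup_eq_union, Finset.union_comm]
        exact hunion
      have hC1walks : ∀ a ∈ C1, ∀ b ∈ C1,
          ∃ p : G.Walk a b, (∀ z ∈ p.support, z ∈ C1) ∧ p.length ≤ 2 := by
        intro a ha b hb
        by_cases hab : a = b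
        · subst hab
          refine ⟨.nil, ?_, by simp⟩
          intro z hz
          simp at hz
          subst hz
          exact ha
        · by_cases hac : a = c
          · have hbc : b ≠ c := fun h => hab (hac.trans h.symm)
            refine ⟨(SimpleGraph.Walk.cons (hadjC1 b hb hbc) .nil).copy hac.symm rfl, ?_,
              by simp⟩
            intro z hz
            rw [SimpleGraph.Walk.support_copy] at hz
            simp at hz
            rcases hz with rfl | rfl
            · exact hcC1
            · exact hb
          · by_cases hbc : b = c
            · refine ⟨(SimpleGraph.Walk.cons (hadjC1 a ha hac).symm .nil).copy rfl hbc.symm,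
                ?_, by simp⟩
              intro z hz
              rw [SimpleGraph.Walk.support_copy] at hz
              simp at hz
              rcases hz with rfl | rfl
              · exact ha
              · exact hcC1
            · refine ⟨.cons (hadjC1 a ha hac).symm (.cons (hadjC1 b hb hbc) .nil), ?_, by simp⟩
              intro z hz
              simp at hz
              rcases hz with rfl | rfl | rfl
              · exact ha
              · exact hcC1
              · exact hb
      have hC1cd := connected_and_diam_le_two hC1ne hC1walks
      have hC1notin : C1 ∉ Q2.parts := by
        intro h
        have hle' : C1 ⊆ C2 := Q2.le h
        exact (Finset.mem_sdiff.mp hcC1).2 (hle' hcC1)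
      refine ⟨Q2.extend hC1nb hdisj.symm hsupeq, ?_, ?_⟩
      · intro D hD
        rw [Finpartition.extend_parts, Finset.mem_insert] at hD
        rcases hD with rfl | hD
        · exact hC1cd
        · exact hQ2parts D hD
      · -- the welfare inequality
        rw [Finpartition.extend_parts, Finset.sum_insert hC1notin]
        have hn1q : (2:ℚ) ≤ (C1.card : ℚ) := by exact_mod_cast h2n1
        have hsq : (1:ℚ) ≤ (K.card : ℚ) := by exact_mod_cast hs1
        have hsnq : (K.card : ℚ) + 1 ≤ (C2.card : ℚ) := by exact_mod_cast hsn2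
        have hE1q : 2 * (C1.card : ℚ) - 2
            ≤ (((C1 ×ˢ C1).filter fun p => G.Adj p.1 p.2).card : ℚ) := by
          have := hWC1
          push_cast
          have h' : (2 * C1.card : ℚ) ≤ (((C1 ×ˢ C1).filter fun p => G.Adj p.1 p.2).card : ℚ) + 2 := by
            exact_mod_cast hWC1
          linarith
        have hE2q : (K.card : ℚ) * (K.card : ℚ) - (K.card : ℚ)
            ≤ (((C2 ×ˢ C2).filter fun p => G.Adj p.1 p.2).card : ℚ) := by
          have h' : ((K.card : ℚ)) * (K.card : ℚ) ≤ (((C2 ×ˢ C2).filter fun p => G.Adj p.1 p.2).card : ℚ) + K.card := by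
            exact_mod_cast hWC2
          linarith
        have hkey := rat_key hn1q hsq hsnq hE1q hE2q
        have huwC : uw G C = ((((C1 ×ˢ C1).filter fun p => G.Adj p.1 p.2).card : ℚ)
            + (((C2 ×ˢ C2).filter fun p => G.Adj p.1 p.2).card : ℚ) + 2 * (K.card : ℚ))
            / ((C1.card : ℚ) + (C2.card : ℚ)) := by
          have h0 : uw G C = (((C ×ˢ C).filter fun p => G.Adj p.1 p.2).card : ℚ)
              / (C.card : ℚ) := rfl
          rw [h0, hWsplit, ← hcards]
          push_cast
          ring
        have huw1 : uw G C1 = (((C1 ×ˢ C1).filter fun p => G.Adj p.1 p.2).card : ℚ)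
            / (C1.card : ℚ) := rfl
        have huw2 : uw G C2 = (((C2 ×ˢ C2).filter fun p => G.Adj p.1 p.2).card : ℚ)
            / (C2.card : ℚ) := rfl
        rw [huwC, huw1]
        rw [huw2] at hQ2sum
        linarith

end BlockAux

theorem diam_ge_three_coalition_split_into_diam_le_two
    {V : Type*} [Fintype V] [DecidableEq V] (G : SimpleGraph V) [DecidableRel G.Adj]
    (hG : IsBlockGraph G) (C : Finset V)
    (hconn : (G.induce (C : Set V)).Connected)
    (hdiam : 3 ≤ (G.induce (C : Set V)).diam) :
    ∃ Q : Finpartition C,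
      (∀ D ∈ Q.parts, (G.induce (D : Set V)).Connected ∧ (G.induce (D : Set V)).diam ≤ 2) ∧
      uw G C ≤ ∑ D ∈ Q.parts, uw G D := by
  classical
  have hne : C.Nonempty := by
    obtain ⟨⟨x, hx⟩⟩ := hconn.nonempty
    exact ⟨x, hx⟩
  have hreach : ∀ x ∈ C, ∀ y ∈ C, BlockAux.ReachIn G C x y :=
    fun x hx y hy => BlockAux.reachIn_of_connected hconn hx hy
  exact BlockAux.main_lemma hG C.card C le_rfl hne hreach
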